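/- arXiv:1703.00929 — 5 statements merged into one kernel-verified Lean document; each statement's English description precedes it below -/
import Mathlib

section
/- Let J be skew-symmetric, V : ℝ^n → ℝ twice continuously differentiable, A a matrix commuting with J and with e^{Ah}, and set M = I - (h/2) e^{Ah/2} J ∇²V e^{-Ah/2} and N = e^{Ah} + (h/2) e^{Ah/2} J ∇²V e^{Ah/2}, where ∇²V is evaluated at a fixed point and is symmetric, and A is skew-symmetric. Then M J M^T = N J N^T. -/
open Matrix NormedSpace

private lemma commute_exp {n : ℕ} {X Y : Matrix (Fin n) (Fin n) ℝ} (hc : Commute X Y) :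
    Commute X (exp Y) := by
  letI : SeminormedRing (Matrix (Fin n) (Fin n) ℝ) := Matrix.linftyOpSemiNormedRing
  letI : NormedRing (Matrix (Fin n) (Fin n) ℝ) := Matrix.linftyOpNormedRing
  letI : NormedAlgebra ℝ (Matrix (Fin n) (Fin n) ℝ) := Matrix.linftyOpNormedAlgebra
  exact hc.exp_right

theorem stmt1 {n : ℕ} (J A Hess : Matrix (Fin n) (Fin n) ℝ) (h : ℝ)
    (hJ : Jᵀ = -J) (hA : Aᵀ = -A) (hAJ : A * J = J * A) (hHess : Hessᵀ = Hess)
    (M N : Matrix (Fin n) (Fin n) ℝ)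
    (hM : M = 1 - (h / 2) • (exp ((h / 2) • A) * (J * Hess) * exp (-((h / 2) • A))))
    (hN : N = exp (h • A) + (h / 2) • (exp ((h / 2) • A) * (J * Hess) * exp ((h / 2) • A))) :
    M * J * Mᵀ = N * J * Nᵀ := by
  set c : ℝ := h / 2 with hc
  set E : Matrix (Fin n) (Fin n) ℝ := exp (c • A) with hE
  set F : Matrix (Fin n) (Fin n) ℝ := exp (-(c • A)) with hF
  have hEF : E * F = 1 := by
    rw [hE, hF, ← Matrix.exp_add_of_commute _ _ (Commute.neg_right (Commute.refl (c • A))),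
      add_neg_cancel, exp_zero]
  have hFE : F * E = 1 := by
    rw [hE, hF, ← Matrix.exp_add_of_commute _ _ (Commute.neg_left (Commute.refl (c • A))),
      neg_add_cancel, exp_zero]
  have hEt : Eᵀ = F := by
    rw [hE, hF, ← Matrix.exp_transpose _, transpose_smul, hA, smul_neg]
  have hFt : Fᵀ = E := by
    rw [hE, hF, ← Matrix.exp_transpose _, transpose_neg, transpose_smul, hA, smul_neg, neg_neg]
  have hJA : Commute J A := (Commute.eq hAJ).symm
  have hJE : Commute J E := commute_exp (hJA.smul_right c)
  have hJF : Commute J F := commute_exp ((hJA.smul_right c).neg_right)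
  have hEE : exp (h • A) = E * E := by
    have h2 : h • A = c • A + c • A := by rw [← add_smul, hc]; ring_nf
    rw [hE, h2, Matrix.exp_add_of_commute _ _ (Commute.refl _)]
  -- transposes
  have hMt : Mᵀ = 1 + c • (E * (Hess * J) * F) := by
    rw [hM]
    simp only [transpose_sub, transpose_one, transpose_smul, transpose_mul, hEt, hFt,
      hHess, hJ]
    rw [Matrix.mul_assoc]
    simp only [Matrix.neg_mul, Matrix.mul_neg, smul_neg, sub_neg_eq_add, Matrix.mul_assoc]
  have hNt : Nᵀ = F * F - c • (F * (Hess * J) * F) := by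
    rw [hN]
    simp only [transpose_add, transpose_smul, transpose_mul, hEt, hFt, hHess, hJ, hEE]
    rw [Matrix.mul_assoc]
    simp only [Matrix.neg_mul, Matrix.mul_neg, smul_neg, Matrix.mul_assoc]
    abel
  -- structured forms
  have hMform : M = E * (1 - c • (J * Hess)) * F := by
    rw [hM, Matrix.mul_sub, Matrix.sub_mul, Matrix.mul_one, hEF, Matrix.mul_smul,
      Matrix.smul_mul]
  have hMtform : Mᵀ = E * (1 + c • (Hess * J)) * F := by
    rw [hMt, Matrix.mul_add, Matrix.add_mul, Matrix.mul_one, hEF, Matrix.mul_smul,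
      Matrix.smul_mul]
  have hNform : N = E * (1 + c • (J * Hess)) * E := by
    rw [hN, hEE, Matrix.mul_add, Matrix.add_mul, Matrix.mul_one, Matrix.mul_smul,
      Matrix.smul_mul]
  have hNtform : Nᵀ = F * (1 - c • (Hess * J)) * F := by
    rw [hNt, Matrix.mul_sub, Matrix.sub_mul, Matrix.mul_one, Matrix.mul_smul,
      Matrix.smul_mul]
  have hJEF : E * J * F = J := by rw [← hJE.eq, Matrix.mul_assoc, hEF, Matrix.mul_one]
  have hJFE : F * J * E = J := by rw [← hJF.eq, Matrix.mul_assoc, hFE, Matrix.mul_one]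
  have key : (1 - c • (J * Hess)) * J * (1 + c • (Hess * J)) =
      (1 + c • (J * Hess)) * J * (1 - c • (Hess * J)) := by
    simp only [Matrix.mul_add, Matrix.add_mul, Matrix.mul_sub, Matrix.sub_mul,
      Matrix.one_mul, Matrix.mul_one, Matrix.smul_mul, Matrix.mul_smul, smul_smul,
      smul_add, smul_sub, neg_smul, smul_neg, Matrix.mul_assoc]
    abel
  calc M * J * Mᵀ
      = E * ((1 - c • (J * Hess)) * (F * J * E) * (1 + c • (Hess * J))) * F := by
        rw [hMtform, hMform]; simp only [Matrix.mul_assoc]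
    _ = E * ((1 - c • (J * Hess)) * J * (1 + c • (Hess * J))) * F := by rw [hJFE]
    _ = E * ((1 + c • (J * Hess)) * J * (1 - c • (Hess * J))) * F := by rw [key]
    _ = E * ((1 + c • (J * Hess)) * (E * J * F) * (1 - c • (Hess * J))) * F := by
        rw [hJEF]
    _ = N * J * Nᵀ := by
        rw [hNtform, hNform]; simp only [Matrix.mul_assoc]
end

section
/- The exponential midpoint rule q_{k+1} = e^{Ah} q_k + h e^{Ah/2} f((e^{Ah/2} q_k + e^{-Ah/2} q_{k+1})/2), applied to the semilinear Poisson system q̇ = J(Dq + ∇V(q)) with A = JD and f = J∇V, defines (implicitly) a map whose Jacobian Φ satisfies Φ J Φ^T = J, i.e., it preserves the constant Poisson structure. -/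
open Matrix NormedSpace

private lemma commute_exp_aux {n : ℕ} (X Y : Matrix (Fin n) (Fin n) ℝ) (h : Commute X Y) :
    Commute X (exp Y) := by
  letI : SeminormedRing (Matrix (Fin n) (Fin n) ℝ) := Matrix.linftyOpSemiNormedRing
  letI : NormedRing (Matrix (Fin n) (Fin n) ℝ) := Matrix.linftyOpNormedRing
  letI : NormedAlgebra ℝ (Matrix (Fin n) (Fin n) ℝ) := Matrix.linftyOpNormedAlgebra
  exact h.exp_right

set_option maxHeartbeats 1000000 in
theorem stmt2 {n : ℕ} (J D Hess : Matrix (Fin n) (Fin n) ℝ) (h : ℝ)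
    (hJ : Jᵀ = -J) (hD : Dᵀ = D) (hJD : J * D = D * J) (hHess : Hessᵀ = Hess)
    (A : Matrix (Fin n) (Fin n) ℝ) (hA : A = J * D)
    (M N Φ : Matrix (Fin n) (Fin n) ℝ)
    (hM : M = 1 - (h / 2) • (exp ((h / 2) • A) * (J * Hess) * exp (-((h / 2) • A))))
    (hN : N = exp (h • A) + (h / 2) • (exp ((h / 2) • A) * (J * Hess) * exp ((h / 2) • A)))
    (hMinv : IsUnit M) (hΦ : Φ = M⁻¹ * N) :
    Φ * J * Φᵀ = J := by
  set c : ℝ := h / 2 with hc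
  set E : Matrix (Fin n) (Fin n) ℝ := exp (c • A) with hE
  set F : Matrix (Fin n) (Fin n) ℝ := exp (-(c • A)) with hF
  set S : Matrix (Fin n) (Fin n) ℝ := J * Hess with hS
  -- A commutes with J
  have hAJ : Commute J A := by
    show J * A = A * J
    rw [hA, mul_assoc, ← hJD, ← mul_assoc]
  -- transpose facts
  have hAT : Aᵀ = -A := by
    rw [hA, transpose_mul, hJ, hD, mul_neg, hJD]
  have hET : Eᵀ = F := by
    rw [hE, hF, ← Matrix.exp_transpose, transpose_smul, hAT, smul_neg]
  have hFT : Fᵀ = E := by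
    rw [hE, hF, ← Matrix.exp_transpose, transpose_neg, transpose_smul, hAT, smul_neg, neg_neg]
  -- E and F are mutually inverse
  have hEF : E * F = 1 := by
    rw [hE, hF, ← Matrix.exp_add_of_commute (c • A) (-(c • A)) (Commute.neg_right (Commute.refl _)),
      add_neg_cancel, NormedSpace.exp_zero]
  have hFE : F * E = 1 := by
    rw [hE, hF, ← Matrix.exp_add_of_commute (-(c • A)) (c • A) (Commute.neg_left (Commute.refl _)),
      neg_add_cancel, NormedSpace.exp_zero]
  -- J commutes with E and F
  have hJE : Commute J E := commute_exp_aux _ _ (hAJ.smul_right c)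
  have hJF : Commute J F := commute_exp_aux _ _ ((hAJ.smul_right c).neg_right)
  -- exp (h • A) = E * E
  have hE2 : exp (h • A) = E * E := by
    have : h • A = c • A + c • A := by rw [← add_smul, hc]; ring_nf
    rw [this, Matrix.exp_add_of_commute (c • A) (c • A) (Commute.refl _), hE]
  -- pointwise rewriting lemmas
  have eEJ : ∀ X : Matrix (Fin n) (Fin n) ℝ, E * (J * X) = J * (E * X) := by
    intro X; rw [← mul_assoc, ← hJE.eq, mul_assoc]
  have eFJ : ∀ X : Matrix (Fin n) (Fin n) ℝ, F * (J * X) = J * (F * X) := by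
    intro X; rw [← mul_assoc, ← hJF.eq, mul_assoc]
  have eEF : ∀ X : Matrix (Fin n) (Fin n) ℝ, E * (F * X) = X := by
    intro X; rw [← mul_assoc, hEF, one_mul]
  have eFE : ∀ X : Matrix (Fin n) (Fin n) ℝ, F * (E * X) = X := by
    intro X; rw [← mul_assoc, hFE, one_mul]
  -- J * Sᵀ = -(S * J)
  have hST : Sᵀ = -(Hess * J) := by rw [hS, transpose_mul, hJ, hHess, mul_neg]
  have eS : ∀ X : Matrix (Fin n) (Fin n) ℝ, J * (Sᵀ * X) = -(S * (J * X)) := by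
    intro X
    rw [hST, hS]
    simp only [neg_mul, mul_neg, neg_inj]
    rw [← mul_assoc, ← mul_assoc, ← mul_assoc]
  -- rewrite N in terms of E
  rw [hE2] at hN
  -- transposes of M and N
  have hMT : Mᵀ = 1 - c • (E * Sᵀ * F) := by
    rw [hM]; simp [transpose_mul, hET, hFT, mul_assoc]
  have hNT : Nᵀ = F * F + c • (F * Sᵀ * F) := by
    rw [hN]; simp [transpose_mul, hET, hFT, mul_assoc]
  -- key identity: N * J * Nᵀ = M * J * Mᵀ
  have key : N * J * Nᵀ = M * J * Mᵀ := by
    rw [hNT, hMT, hN, hM]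
    simp only [mul_add, add_mul, mul_sub, sub_mul, mul_one, one_mul,
      smul_mul_assoc, mul_smul_comm, smul_smul, mul_assoc]
    simp only [eEJ, eFJ, eEF, eFE, eS, hJF.eq, mul_neg, neg_mul, smul_neg, mul_assoc,
      hEF, hFE, mul_one]
    rw [show F * J = J * F from hJF.eq.symm, ← eEJ, eS]
    simp only [mul_neg, neg_mul, smul_neg, neg_smul]
    module
  -- conclude
  have hdet : IsUnit M.det := (Matrix.isUnit_iff_isUnit_det M).mp hMinv
  have hMinvM : M⁻¹ * M = 1 := Matrix.nonsing_inv_mul M hdet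
  have hMTinv : (M⁻¹)ᵀ = (Mᵀ)⁻¹ := Matrix.transpose_nonsing_inv M
  have hdetT : IsUnit Mᵀ.det := by rwa [Matrix.det_transpose]
  have hMTMTinv : Mᵀ * (Mᵀ)⁻¹ = 1 := Matrix.mul_nonsing_inv _ hdetT
  rw [hΦ, transpose_mul, hMTinv]
  calc M⁻¹ * N * J * (Nᵀ * (Mᵀ)⁻¹)
      = M⁻¹ * (N * J * Nᵀ) * (Mᵀ)⁻¹ := by noncomm_ring
    _ = M⁻¹ * (M * J * Mᵀ) * (Mᵀ)⁻¹ := by rw [key]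
    _ = (M⁻¹ * M) * J * (Mᵀ * (Mᵀ)⁻¹) := by noncomm_ring
    _ = J := by rw [hMinvM, hMTMTinv, one_mul, mul_one]
end

section
/- Let J be skew-symmetric, D symmetric, JD = DJ, A = JD, S = e^{Ah}, T = ∫₀^h e^{Aτ} dτ. Suppose ∇̄V : ℝ^n × ℝ^n → ℝ^n is a discrete gradient of V, i.e., ∇̄V(x,y)·(y-x) = V(y) - V(x). If q_{k+1} = S q_k + T J ∇̄V(q_k, q_{k+1}), then H(q_{k+1}) = H(q_k), where H(q) = ½ q^T D q + V(q). -/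
open Matrix NormedSpace

section LinftyAux
attribute [local instance] Matrix.linftyOpNormedRing Matrix.linftyOpNormedAlgebra

theorem myExpContAux {n : ℕ} (A : Matrix (Fin n) (Fin n) ℝ) :
    Continuous fun τ : ℝ => exp (τ • A) :=
  exp_continuous.comp (continuous_id.smul continuous_const)

theorem myExpSlope {n : ℕ} (A : Matrix (Fin n) (Fin n) ℝ) (t : ℝ) :
    Filter.Tendsto (slope (fun τ : ℝ => exp (τ • A)) t) (nhdsWithin t {t}ᶜ)
      (nhds (A * exp (t • A))) :=
  hasDerivAt_iff_tendsto_slope.mp (hasDerivAt_exp_smul_const' A t)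

theorem myCommExp {n : ℕ} {X A : Matrix (Fin n) (Fin n) ℝ} (hXA : Commute X A) (t : ℝ) :
    Commute X (exp (t • A)) :=
  (hXA.smul_right t).exp_right

theorem myExpAdd {n : ℕ} (A : Matrix (Fin n) (Fin n) ℝ) (s t : ℝ) :
    exp (s • A) * exp (t • A) = exp ((s + t) • A) := by
  rw [add_smul]; exact (exp_add_of_commute (((Commute.refl A).smul_left s).smul_right t)).symm

theorem myExpTranspose {n : ℕ} (A : Matrix (Fin n) (Fin n) ℝ) (t : ℝ) :
    (exp (t • A))ᵀ = exp (t • Aᵀ) := by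
  rw [← Matrix.exp_transpose, transpose_smul]

end LinftyAux

attribute [local instance] Matrix.normedAddCommGroup Matrix.normedSpace

theorem myExpCont {n : ℕ} (A : Matrix (Fin n) (Fin n) ℝ) :
    Continuous fun τ : ℝ => exp (τ • A) := myExpContAux A

theorem myExpDeriv {n : ℕ} (A : Matrix (Fin n) (Fin n) ℝ) (t : ℝ) :
    HasDerivAt (fun τ : ℝ => exp (τ • A)) (A * exp (t • A)) t :=
  hasDerivAt_iff_tendsto_slope.mpr (myExpSlope A t)

theorem myLinInt {n : ℕ} (L : Matrix (Fin n) (Fin n) ℝ →ₗ[ℝ] Matrix (Fin n) (Fin n) ℝ)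
    (f : ℝ → Matrix (Fin n) (Fin n) ℝ) (hf : Continuous f) (a b : ℝ) :
    L (∫ τ in a..b, f τ) = ∫ τ in a..b, L (f τ) :=
  (ContinuousLinearMap.intervalIntegral_comp_comm (LinearMap.toContinuousLinearMap L)
    (hf.intervalIntegrable a b)).symm

/-- left multiplication passes through the integral -/
theorem myMulInt {n : ℕ} (X : Matrix (Fin n) (Fin n) ℝ)
    (f : ℝ → Matrix (Fin n) (Fin n) ℝ) (hf : Continuous f) (a b : ℝ) :
    X * (∫ τ in a..b, f τ) = ∫ τ in a..b, X * f τ :=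
  myLinInt (LinearMap.mulLeft ℝ X) f hf a b

theorem myIntMul {n : ℕ} (X : Matrix (Fin n) (Fin n) ℝ)
    (f : ℝ → Matrix (Fin n) (Fin n) ℝ) (hf : Continuous f) (a b : ℝ) :
    (∫ τ in a..b, f τ) * X = ∫ τ in a..b, f τ * X :=
  myLinInt (LinearMap.mulRight ℝ X) f hf a b

theorem myTransposeInt {n : ℕ} (f : ℝ → Matrix (Fin n) (Fin n) ℝ) (hf : Continuous f) (a b : ℝ) :
    (∫ τ in a..b, f τ)ᵀ = ∫ τ in a..b, (f τ)ᵀ :=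
  myLinInt (Matrix.transposeLinearEquiv (Fin n) (Fin n) ℝ ℝ).toLinearMap f hf a b

/-- commuting with the generator gives commuting with the integral of the flow -/
theorem myCommInt {n : ℕ} {X A : Matrix (Fin n) (Fin n) ℝ} (hXA : Commute X A) (a b : ℝ) :
    X * (∫ τ in a..b, exp (τ • A)) = (∫ τ in a..b, exp (τ • A)) * X := by
  rw [myMulInt X _ (myExpCont A), myIntMul X _ (myExpCont A)]
  exact intervalIntegral.integral_congr fun t _ => myCommExp hXA t

theorem myFTC {n : ℕ} (A : Matrix (Fin n) (Fin n) ℝ) (h : ℝ) :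
    A * (∫ τ in (0:ℝ)..h, exp (τ • A)) = exp (h • A) - 1 := by
  rw [myMulInt A _ (myExpCont A)]
  have hcont : Continuous fun τ : ℝ => A * exp (τ • A) :=
    (LinearMap.toContinuousLinearMap (LinearMap.mulLeft ℝ A)).continuous.comp (myExpCont A)
  rw [intervalIntegral.integral_eq_sub_of_hasDerivAt (fun t _ => myExpDeriv A t)
    (hcont.intervalIntegrable 0 h)]
  rw [zero_smul, exp_zero]

theorem flipDot {n : ℕ} (M : Matrix (Fin n) (Fin n) ℝ) (x y : Fin n → ℝ) :
    x ⬝ᵥ M.mulVec y = y ⬝ᵥ Mᵀ.mulVec x := by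
  rw [Matrix.dotProduct_mulVec, Matrix.mulVec_transpose, dotProduct_comm]
theorem stmt4 {n : ℕ} (J D : Matrix (Fin n) (Fin n) ℝ) (h : ℝ)
    (hJ : Jᵀ = -J) (hD : Dᵀ = D) (hJD : J * D = D * J)
    (A S T : Matrix (Fin n) (Fin n) ℝ)
    (hA : A = J * D) (hS : S = exp (h • A)) (hT : T = ∫ τ in (0:ℝ)..h, exp (τ • A))
    (V : (Fin n → ℝ) → ℝ) (dgV : (Fin n → ℝ) → (Fin n → ℝ) → (Fin n → ℝ))
    (hdg : ∀ x y, dgV x y ⬝ᵥ (y - x) = V y - V x)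
    (H : (Fin n → ℝ) → ℝ) (hH : ∀ q, H q = (1/2) * (q ⬝ᵥ D.mulVec q) + V q)
    (qk qk1 : Fin n → ℝ)
    (hstep : qk1 = S.mulVec qk + T.mulVec (J.mulVec (dgV qk qk1))) :
    H qk1 = H qk := by
  -- basic algebraic facts
  have hAt : Aᵀ = -A := by
    rw [hA, transpose_mul, hD, hJ, mul_neg, hJD]
  have cDA : Commute D A := by
    rw [Commute, SemiconjBy, hA, ← mul_assoc, ← hJD]
  have cJA : Commute J A := by
    rw [Commute, SemiconjBy, hA, mul_assoc, ← hJD]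
  have cAS : Commute A S := by rw [hS]; exact myCommExp (Commute.refl A) h
  have cDS : Commute D S := by rw [hS]; exact myCommExp cDA h
  -- transpose formulas
  have hSt : Sᵀ = exp (h • (-A)) := by rw [hS, myExpTranspose, hAt]
  have hTt : Tᵀ = ∫ τ in (0:ℝ)..h, exp (τ • (-A)) := by
    rw [hT, myTransposeInt _ (myExpCont A)]
    exact intervalIntegral.integral_congr fun t _ => by rw [myExpTranspose, hAt]
  -- S orthogonality
  have hStS : Sᵀ * S = 1 := by
    rw [hSt, hS, smul_neg, ← neg_smul, myExpAdd, neg_add_cancel, zero_smul, exp_zero]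
  -- commutation with T and Tᵀ
  have cDT : D * T = T * D := by rw [hT]; exact myCommInt cDA 0 h
  have cDTt : D * Tᵀ = Tᵀ * D := by rw [hTt]; exact myCommInt cDA.neg_right 0 h
  have cJTt : J * Tᵀ = Tᵀ * J := by rw [hTt]; exact myCommInt cJA.neg_right 0 h
  have cATt : A * Tᵀ = Tᵀ * A := by rw [hTt]; exact myCommInt (Commute.refl A).neg_right 0 h
  -- fundamental theorem of calculus
  have hAT : A * T = S - 1 := by rw [hT, hS]; exact myFTC A h
  -- Tᵀ * S = T
  have hTtS : Tᵀ * S = T := by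
    rw [hTt, hS, myIntMul _ _ (myExpCont (-A))]
    rw [intervalIntegral.integral_congr (g := fun τ : ℝ => exp ((h - τ) • A))
      (fun t _ => by rw [smul_neg, ← neg_smul, myExpAdd, ← sub_eq_neg_add])]
    rw [intervalIntegral.integral_comp_sub_left (fun τ : ℝ => exp (τ • A)) h]
    rw [sub_self, sub_zero, ← hT]
  -- main matrix identities
  have I1 : Sᵀ * (D * S) = D := by
    rw [cDS.eq, ← mul_assoc, hStS, one_mul]
  have I2 : (T * J)ᵀ * (D * S) = 1 - S := by
    have inner : J * Tᵀ * (D * S) = S - 1 := by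
      rw [cDS.eq, mul_assoc J Tᵀ (S * D), ← mul_assoc Tᵀ S D, hTtS, ← cDT,
        ← mul_assoc, ← hA, hAT]
    rw [transpose_mul, hJ]
    calc (-J) * Tᵀ * (D * S) = -(J * Tᵀ * (D * S)) := by noncomm_ring
      _ = -(S - 1) := by rw [inner]
      _ = 1 - S := by noncomm_ring
  have E : J * Tᵀ * D * T * J = T * J - J * Tᵀ := by
    calc J * Tᵀ * D * T * J = J * (Tᵀ * D) * T * J := by noncomm_ring
      _ = J * (D * Tᵀ) * T * J := by rw [cDTt]
      _ = A * Tᵀ * T * J := by rw [hA]; noncomm_ring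
      _ = Tᵀ * A * T * J := by rw [cATt]
      _ = Tᵀ * (A * T) * J := by noncomm_ring
      _ = Tᵀ * (S - 1) * J := by rw [hAT]
      _ = Tᵀ * S * J - Tᵀ * J := by noncomm_ring
      _ = T * J - J * Tᵀ := by rw [hTtS, cJTt]
  have I3 : (T * J)ᵀ * (D * (T * J)) = -(T * J + (T * J)ᵀ) := by
    calc (T * J)ᵀ * (D * (T * J)) = Jᵀ * Tᵀ * (D * (T * J)) := by rw [transpose_mul]
      _ = -(J * Tᵀ * D * T * J) := by rw [hJ]; noncomm_ring
      _ = -(T * J - J * Tᵀ) := by rw [E]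
      _ = -(T * J + (T * J)ᵀ) := by rw [transpose_mul, hJ]; noncomm_ring
  -- vector computation
  set g := dgV qk qk1 with hg
  have hstep2 : qk1 = S.mulVec qk + (T * J).mulVec g := by
    rw [hstep, Matrix.mulVec_mulVec]
  have key : ∀ (M N : Matrix (Fin n) (Fin n) ℝ) (x y : Fin n → ℝ),
      (M.mulVec x) ⬝ᵥ (D.mulVec (N.mulVec y)) = x ⬝ᵥ (Mᵀ * (D * N)).mulVec y := by
    intro M N x y
    rw [Matrix.mulVec_mulVec, dotProduct_comm, flipDot, Matrix.mulVec_mulVec]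
  have E1 : qk1 ⬝ᵥ D.mulVec qk1 = qk ⬝ᵥ D.mulVec qk
      + 2 * (g ⬝ᵥ ((T * J)ᵀ * (D * S)).mulVec qk)
      + g ⬝ᵥ ((T * J)ᵀ * (D * (T * J))).mulVec g := by
    rw [hstep2, Matrix.mulVec_add, dotProduct_add, add_dotProduct, add_dotProduct]
    rw [key S S qk qk, key S (T * J) qk g, key (T * J) S g qk, key (T * J) (T * J) g g]
    rw [I1]
    have flip12 : qk ⬝ᵥ (Sᵀ * (D * (T * J))).mulVec g
        = g ⬝ᵥ ((T * J)ᵀ * (D * S)).mulVec qk := by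
      rw [flipDot]
      congr 2
      rw [transpose_mul, transpose_mul, transpose_transpose, hD, mul_assoc]
    rw [flip12]; ring
  have E2 : g ⬝ᵥ ((T * J)ᵀ * (D * S)).mulVec qk = g ⬝ᵥ qk - g ⬝ᵥ S.mulVec qk := by
    rw [I2, Matrix.sub_mulVec, dotProduct_sub, Matrix.one_mulVec]
  have E3 : g ⬝ᵥ ((T * J)ᵀ * (D * (T * J))).mulVec g = -(2 * (g ⬝ᵥ (T * J).mulVec g)) := by
    rw [I3, Matrix.neg_mulVec, dotProduct_neg, Matrix.add_mulVec, dotProduct_add]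
    rw [← flipDot (T * J) g g]
    ring
  have E4 : V qk1 - V qk = (g ⬝ᵥ S.mulVec qk - g ⬝ᵥ qk) + g ⬝ᵥ (T * J).mulVec g := by
    rw [← hdg qk qk1, ← hg]
    nth_rewrite 1 [hstep2]
    rw [add_sub_right_comm, dotProduct_add, dotProduct_sub]
  rw [hH qk1, hH qk]
  linarith [E1, E2, E3, E4]
end

section
/- A one-step composition of two exponential midpoint steps with stepsizes b₁h and b₂h, namely Z₁ = e^{Ab₁h}q + b₁h e^{Ab₁h/2} f((e^{Ab₁h/2}q + e^{-Ab₁h/2}Z₁)/2) followed by Z₂ = e^{Ab₂h}Z₁ + b₂h e^{Ab₂h/2} f((e^{Ab₂h/2}Z₁ + e^{-Ab₂h/2}Z₂)/2), is equivalent to the 2-stage diagonally implicit exponential Runge–Kutta scheme Q₁ = e^{Ahc₁}q + h(b₁/2)f(Q₁), Q₂ = e^{Ahc₂}q + h b₁ e^{Ah(c₂-c₁)}f(Q₁) + h(b₂/2)f(Q₂), Z₂ = e^{Ah(b₁+b₂)}q + h b₁ e^{Ah(b₁/2+b₂)}f(Q₁) + h b₂ e^{Ah b₂/2}f(Q₂),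 where c₁ = b₁/2, c₂ = b₁ + b₂/2, under the substitutions Q₁ = (e^{Ab₁h/2}q + e^{-Ab₁h/2}Z₁)/2 and Q₂ = (e^{Ab₂h/2}Z₁ + e^{-Ab₂h/2}Z₂)/2. -/
open Matrix NormedSpace

private theorem key14 {n : ℕ} (A : Matrix (Fin n) (Fin n) ℝ) (s t : ℝ) (x : Fin n → ℝ) :
    (exp (s • A)).mulVec ((exp (t • A)).mulVec x) = (exp ((s + t) • A)).mulVec x := by
  rw [mulVec_mulVec, ← Matrix.exp_add_of_commute _ _
    ((Commute.refl A).smul_left s |>.smul_right t), add_smul]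

private theorem unkey14 {n : ℕ} (A : Matrix (Fin n) (Fin n) ℝ) (c : ℝ) (x y z : Fin n → ℝ)
    (hx : x = (1 / 2 : ℝ) • ((exp (c • A)).mulVec y + (exp (-(c • A))).mulVec z)) :
    z = (2 : ℝ) • (exp (c • A)).mulVec x - (exp ((2 * c) • A)).mulVec y := by
  rw [hx]
  simp only [← neg_smul, mulVec_add, mulVec_smul, key14, smul_add, smul_smul]
  ring_nf
  simp only [zero_smul, exp_zero, one_mulVec, mul_two]
  module

theorem stmt14 {n : ℕ} (A : Matrix (Fin n) (Fin n) ℝ) (f : (Fin n → ℝ) → (Fin n → ℝ))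
    (h b₁ b₂ : ℝ) (q Z₁ Z₂ Q₁ Q₂ : Fin n → ℝ)
    (c₁ c₂ : ℝ) (hc₁ : c₁ = b₁ / 2) (hc₂ : c₂ = b₁ + b₂ / 2)
    (hQ₁ : Q₁ = (1 / 2 : ℝ) •
      ((exp ((b₁ * h / 2) • A)).mulVec q + (exp (-((b₁ * h / 2) • A))).mulVec Z₁))
    (hQ₂ : Q₂ = (1 / 2 : ℝ) •
      ((exp ((b₂ * h / 2) • A)).mulVec Z₁ + (exp (-((b₂ * h / 2) • A))).mulVec Z₂)) :
    ((Z₁ = (exp ((b₁ * h) • A)).mulVec q +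
        (b₁ * h) • (exp ((b₁ * h / 2) • A)).mulVec (f Q₁)) ∧
     (Z₂ = (exp ((b₂ * h) • A)).mulVec Z₁ +
        (b₂ * h) • (exp ((b₂ * h / 2) • A)).mulVec (f Q₂))) ↔
    ((Q₁ = (exp ((h * c₁) • A)).mulVec q + (h * (b₁ / 2)) • f Q₁) ∧
     (Q₂ = (exp ((h * c₂) • A)).mulVec q +
        (h * b₁) • (exp ((h * (c₂ - c₁)) • A)).mulVec (f Q₁) + (h * (b₂ / 2)) • f Q₂) ∧
     (Z₂ = (exp ((h * (b₁ + b₂)) • A)).mulVec q +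
        (h * b₁) • (exp ((h * (b₁ / 2 + b₂)) • A)).mulVec (f Q₁) +
        (h * b₂) • (exp ((h * (b₂ / 2)) • A)).mulVec (f Q₂))) := by
  subst hc₁ hc₂
  constructor
  · rintro ⟨h1, h2⟩
    refine ⟨?_, ?_, ?_⟩
    · conv_lhs => rw [hQ₁, h1]
      simp only [← neg_smul, mulVec_add, mulVec_smul, key14, smul_add, smul_smul]
      ring_nf
      all_goals try simp only [zero_smul, exp_zero, one_mulVec, mul_two]
      all_goals module
    · conv_lhs => rw [hQ₂, h2, h1]
      simp only [← neg_smul, mulVec_add, mulVec_smul, key14, smul_add, smul_smul]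
      ring_nf
      all_goals try simp only [zero_smul, exp_zero, one_mulVec, mul_two]
      all_goals module
    · conv_lhs => rw [h2, h1]
      simp only [← neg_smul, mulVec_add, mulVec_smul, key14, smul_add, smul_smul]
      ring_nf
      all_goals try simp only [zero_smul, exp_zero, one_mulVec, mul_two]
      all_goals module
  · rintro ⟨e1, e2, e3⟩
    have hZ₁ := unkey14 A (b₁ * h / 2) Q₁ q Z₁ hQ₁
    have hZ₂ := unkey14 A (b₂ * h / 2) Q₂ Z₁ Z₂ hQ₂
    have g1 : Z₁ = (exp ((b₁ * h) • A)).mulVec q +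
        (b₁ * h) • (exp ((b₁ * h / 2) • A)).mulVec (f Q₁) := by
      conv_lhs => rw [hZ₁, e1]
      simp only [← neg_smul, mulVec_add, mulVec_smul, key14, smul_add, smul_smul, smul_sub]
      ring_nf
      all_goals try simp only [zero_smul, exp_zero, one_mulVec, mul_two]
      all_goals module
    refine ⟨g1, ?_⟩
    conv_lhs => rw [hZ₂, e2, g1]
    conv_rhs => rw [g1]
    simp only [← neg_smul, mulVec_add, mulVec_smul, key14, smul_add, smul_smul, smul_sub]
    ring_nf
    simp only [zero_smul, exp_zero, one_mulVec, mul_two]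
    module
end

section
/- For A skew-symmetric with S = e^{Ah}, T = ∫₀^h e^{Aτ}dτ, and J skew-symmetric commuting with A (hence with S and T): J^T T^T A T = J^T T + J T^T, and consequently ½ g^T J^T T^T A T g = g^T T^T J g for all g ∈ ℝ^n. -/
open Matrix NormedSpace

section aux

attribute [local instance] Matrix.linftyOpNormedRing Matrix.linftyOpNormedAlgebra

variable {n : ℕ}

private noncomputable def entryCLM (i j : Fin n) : Matrix (Fin n) (Fin n) ℝ →L[ℝ] ℝ :=
  LinearMap.toContinuousLinearMap
    ((LinearMap.proj j).comp (LinearMap.proj (R := ℝ) (φ := fun _ : Fin n => Fin n → ℝ) i))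

private lemma entryCLM_apply (i j : Fin n) (M : Matrix (Fin n) (Fin n) ℝ) :
    entryCLM i j M = M i j := rfl

private lemma aux_cont (A : Matrix (Fin n) (Fin n) ℝ) (i j : Fin n) :
    Continuous fun τ : ℝ => exp (τ • A) i j := by
  have : Continuous fun τ : ℝ => entryCLM i j (exp (τ • A)) :=
    (entryCLM i j).continuous.comp
      (exp_continuous.comp (continuous_id.smul continuous_const))
  simpa [entryCLM_apply] using this

private lemma aux_ftc (A : Matrix (Fin n) (Fin n) ℝ) (h : ℝ) (i j : Fin n) :
    ∫ τ in (0:ℝ)..h, (A * exp (τ • A)) i j = (exp (h • A) - 1) i j := by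
  have hc : Continuous fun τ : ℝ => A * exp (τ • A) :=
    continuous_const.mul (exp_continuous.comp (continuous_id.smul continuous_const))
  have hint : @IntervalIntegrable _ _ NormedAddGroup.toENormedAddMonoid (fun τ : ℝ => A * exp (τ • A)) MeasureTheory.volume 0 h :=
    hc.intervalIntegrable _ _
  have hI : (∫ τ in (0:ℝ)..h, A * exp (τ • A)) = exp (h • A) - exp ((0:ℝ) • A) :=
    intervalIntegral.integral_eq_sub_of_hasDerivAt
      (fun t _ => hasDerivAt_exp_smul_const' A t) hint
  have := (entryCLM i j).intervalIntegral_comp_comm hint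
  replace this : ∫ τ in (0:ℝ)..h, (A * exp (τ • A)) i j = (∫ τ in (0:ℝ)..h, A * exp (τ • A)) i j := this
  rw [this, hI, zero_smul, exp_zero]

private lemma aux_comm (A J : Matrix (Fin n) (Fin n) ℝ) (hAJ : A * J = J * A) (τ : ℝ) :
    J * exp (τ • A) = exp (τ • A) * J := by
  have hc : Commute J (τ • A) := (Commute.smul_right (hAJ.symm : Commute J A) τ)
  exact hc.exp_right

end aux

attribute [local instance] Matrix.normedAddCommGroup Matrix.normedSpace

section aux2

variable {n : ℕ}

private noncomputable def entryCLM' (i j : Fin n) : Matrix (Fin n) (Fin n) ℝ →L[ℝ] ℝ :=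
  LinearMap.toContinuousLinearMap
    ((LinearMap.proj j).comp (LinearMap.proj (R := ℝ) (φ := fun _ : Fin n => Fin n → ℝ) i))

private lemma entryCLM'_apply (i j : Fin n) (M : Matrix (Fin n) (Fin n) ℝ) :
    entryCLM' i j M = M i j := rfl

end aux2

theorem stmt15 {n : ℕ} (A J : Matrix (Fin n) (Fin n) ℝ)
    (hA : Aᵀ = -A) (hJ : Jᵀ = -J) (hAJ : A * J = J * A) (h : ℝ)
    (S T : Matrix (Fin n) (Fin n) ℝ)
    (hS : S = exp (h • A)) (hT : T = ∫ τ in (0:ℝ)..h, exp (τ • A)) :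
    Jᵀ * Tᵀ * A * T = Jᵀ * T + J * Tᵀ ∧
    ∀ g : Fin n → ℝ,
      (1 / 2) * (g ⬝ᵥ (Jᵀ * Tᵀ * A * T).mulVec g) = g ⬝ᵥ (Tᵀ * J).mulVec g := by
  have hcont : Continuous fun τ : ℝ => exp (τ • A) :=
    continuous_matrix fun i j => aux_cont A i j
  have hint : @IntervalIntegrable _ _ NormedAddGroup.toENormedAddMonoid (fun τ : ℝ => exp (τ • A)) MeasureTheory.volume 0 h :=
    hcont.intervalIntegrable _ _
  have hTe : ∀ i j, T i j = ∫ τ in (0:ℝ)..h, exp (τ • A) i j := by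
    intro i j
    rw [hT]
    have := (entryCLM' i j).intervalIntegral_comp_comm hint
    replace this : ∫ τ in (0:ℝ)..h, exp (τ • A) i j = (∫ τ in (0:ℝ)..h, exp (τ • A)) i j := this
    exact this.symm
  have hMT : ∀ (M : Matrix (Fin n) (Fin n) ℝ) (i j : Fin n),
      (M * T) i j = ∫ τ in (0:ℝ)..h, (M * exp (τ • A)) i j := by
    intro M i j
    rw [Matrix.mul_apply]
    have h1 : ∀ k, M i k * T k j = ∫ τ in (0:ℝ)..h, M i k * exp (τ • A) k j := by
      intro k
      rw [hTe k j, intervalIntegral.integral_const_mul]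
    rw [Finset.sum_congr rfl (fun k _ => h1 k),
      ← intervalIntegral.integral_finset_sum (f := fun k τ => M i k * exp (τ • A) k j)
        (fun k _ => ((continuous_const.mul (aux_cont A k j)).intervalIntegrable _ _))]
    simp only [Matrix.mul_apply]
  have hTM : ∀ (M : Matrix (Fin n) (Fin n) ℝ) (i j : Fin n),
      (T * M) i j = ∫ τ in (0:ℝ)..h, (exp (τ • A) * M) i j := by
    intro M i j
    rw [Matrix.mul_apply]
    have h1 : ∀ k, T i k * M k j = ∫ τ in (0:ℝ)..h, exp (τ • A) i k * M k j := by
      intro k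
      rw [hTe i k, intervalIntegral.integral_mul_const]
    rw [Finset.sum_congr rfl (fun k _ => h1 k),
      ← intervalIntegral.integral_finset_sum (f := fun k τ => exp (τ • A) i k * M k j)
        (fun k _ => (((aux_cont A i k).mul continuous_const).intervalIntegrable _ _))]
    simp only [Matrix.mul_apply]
  -- A * T = S - 1
  have hAT : A * T = S - 1 := by
    ext i j
    rw [hMT A i j, hS]
    exact aux_ftc A h i j
  -- J * T = T * J
  have hJT : J * T = T * J := by
    ext i j
    rw [hMT J i j, hTM J i j]
    congr 1
    ext τ
    rw [aux_comm A J hAJ τ]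
  -- Sᵀ = exp((-h) • A)
  have hSt : Sᵀ = exp ((-h) • A) := by
    rw [hS, ← Matrix.exp_transpose, transpose_smul, hA, smul_neg, ← neg_smul]
  -- Sᵀ * T = Tᵀ
  have hST : Sᵀ * T = Tᵀ := by
    ext i j
    rw [hMT Sᵀ i j, Matrix.transpose_apply, hTe j i]
    have e1 : ∀ τ : ℝ, (Sᵀ * exp (τ • A)) i j = exp ((τ - h) • A) i j := by
      intro τ
      rw [hSt, ← Matrix.exp_add_of_commute _ _
        (((Commute.refl A).smul_left (-h)).smul_right τ), ← add_smul, neg_add_eq_sub]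
    have e2 : ∀ τ : ℝ, exp (τ • A) j i = exp ((-τ) • A) i j := by
      intro τ
      rw [← Matrix.transpose_apply (exp ((-τ) • A)) j i, ← Matrix.exp_transpose,
        transpose_smul, hA, smul_neg, ← neg_smul, neg_neg]
    simp only [e1, e2]
    have := intervalIntegral.integral_comp_sub_right
      (a := (0:ℝ)) (b := h) (fun σ : ℝ => exp (σ • A) i j) h
    rw [this]
    have := intervalIntegral.integral_comp_neg
      (a := (0:ℝ)) (b := h) (f := fun σ : ℝ => exp (σ • A) i j)
    rw [this]
    norm_num
  -- Tᵀ * A = 1 - Sᵀ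
  have hTA : Tᵀ * A = 1 - Sᵀ := by
    calc Tᵀ * A = -(Tᵀ * Aᵀ) := by rw [hA, Matrix.mul_neg, neg_neg]
      _ = -((A * T)ᵀ) := by rw [Matrix.transpose_mul]
      _ = -((S - 1)ᵀ) := by rw [hAT]
      _ = 1 - Sᵀ := by rw [Matrix.transpose_sub, Matrix.transpose_one, neg_sub]
  have key : Jᵀ * Tᵀ * A * T = Jᵀ * T + J * Tᵀ := by
    calc Jᵀ * Tᵀ * A * T = Jᵀ * (Tᵀ * A * T) := by rw [mul_assoc, mul_assoc, mul_assoc]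
      _ = Jᵀ * ((1 - Sᵀ) * T) := by rw [hTA]
      _ = Jᵀ * (T - Sᵀ * T) := by rw [sub_mul, one_mul]
      _ = Jᵀ * (T - Tᵀ) := by rw [hST]
      _ = Jᵀ * T - Jᵀ * Tᵀ := by rw [Matrix.mul_sub]
      _ = Jᵀ * T + J * Tᵀ := by rw [hJ]; simp [Matrix.neg_mul, sub_neg_eq_add]
  refine ⟨key, ?_⟩
  intro g
  have hsym : ∀ M : Matrix (Fin n) (Fin n) ℝ,
      g ⬝ᵥ M.mulVec g = g ⬝ᵥ Mᵀ.mulVec g := by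
    intro M
    rw [Matrix.dotProduct_mulVec, ← Matrix.mulVec_transpose, dotProduct_comm]
  have hJTt : J * Tᵀ = Tᵀ * J := by
    have := congrArg Matrix.transpose hJT
    rw [Matrix.transpose_mul, Matrix.transpose_mul, hJ, Matrix.mul_neg, Matrix.neg_mul] at this
    exact (neg_injective this).symm
  have e1 : g ⬝ᵥ (Jᵀ * T).mulVec g = g ⬝ᵥ (Tᵀ * J).mulVec g := by
    rw [hsym (Jᵀ * T), Matrix.transpose_mul, Matrix.transpose_transpose]
  have e2 : g ⬝ᵥ (J * Tᵀ).mulVec g = g ⬝ᵥ (Tᵀ * J).mulVec g := by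
    rw [hJTt]
  rw [key, Matrix.add_mulVec, dotProduct_add, e1, e2]
  ring
end
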